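/- Let P₁, P₂ be row-stochastic S×S matrices, each uniformly ergodic with common constants m ≥ 1, ρ ∈ (0,1) (so sup_s ‖P_i^t(s,·) − μ_i‖_TV ≤ m ρ^t), with stationary distributions μ₁, μ₂. Then ‖μ₁ − μ₂‖_TV ≤ σ ‖P₁ − P₂‖_TV, where σ = n̂ + m ρ^{n̂}/(1−ρ), n̂ = ⌈log_ρ(1/m)⌉, and ‖P₁−P₂‖_TV := sup_{‖q‖_TV=1} ‖Σ_s q(s)(P₁(s,·) − P₂(s,·))‖_TV. -/

import Mathlib

open Matrix

/-- Perturbation bound for stationary distributions of uniformly ergodic Markov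
chains (Mitrophanov 2005, Cor. 3.1): `‖μ₁ - μ₂‖_TV ≤ σ ‖P₁ - P₂‖_TV`, where total
variation is the L¹ distance, `σ = n̂ + m ρ^n̂/(1-ρ)` and `n̂ = ⌈log_ρ(1/m)⌉`.
The operator norm `‖P₁ - P₂‖_TV` is expressed via an arbitrary upper bound `D`
over all signed vectors `q` with `‖q‖₁ = 1`. -/
theorem stationary_distribution_perturbation {S : Type*} [Fintype S] [DecidableEq S]
    (P₁ P₂ : Matrix S S ℝ)
    (hP₁nn : ∀ s s', 0 ≤ P₁ s s') (hP₁row : ∀ s, ∑ s', P₁ s s' = 1)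
    (hP₂nn : ∀ s s', 0 ≤ P₂ s s') (hP₂row : ∀ s, ∑ s', P₂ s s' = 1)
    (m ρ : ℝ) (hm : 1 ≤ m) (hρ : ρ ∈ Set.Ioo (0 : ℝ) 1)
    (μ₁ μ₂ : S → ℝ)
    (hμ₁nn : ∀ s, 0 ≤ μ₁ s) (hμ₁sum : ∑ s, μ₁ s = 1)
    (hμ₂nn : ∀ s, 0 ≤ μ₂ s) (hμ₂sum : ∑ s, μ₂ s = 1)
    (hμ₁stat : ∀ z, ∑ s, μ₁ s * P₁ s z = μ₁ z)
    (hμ₂stat : ∀ z, ∑ s, μ₂ s * P₂ s z = μ₂ z)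
    (herg₁ : ∀ (s : S) (t : ℕ), ∑ z, |(P₁ ^ t) s z - μ₁ z| ≤ m * ρ ^ t)
    (herg₂ : ∀ (s : S) (t : ℕ), ∑ z, |(P₂ ^ t) s z - μ₂ z| ≤ m * ρ ^ t)
    (D : ℝ)
    (hD : ∀ q : S → ℝ, ∑ s, |q s| = 1 →
      ∑ z, |∑ s, q s * (P₁ s z - P₂ s z)| ≤ D) :
    ∑ z, |μ₁ z - μ₂ z| ≤
      ((⌈Real.logb ρ m⁻¹⌉₊ : ℝ) +
        m * ρ ^ (⌈Real.logb ρ m⁻¹⌉₊ : ℕ) / (1 - ρ)) * D := by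
  obtain ⟨hρ0, hρ1⟩ := hρ
  set n : ℕ := ⌈Real.logb ρ m⁻¹⌉₊ with hn
  have hSne : Nonempty S := by
    by_contra h
    rw [not_nonempty_iff] at h
    simp at hμ₁sum
  have hD0 : 0 ≤ D := by
    obtain ⟨s0⟩ := hSne
    refine le_trans ?_ (hD (fun s => if s = s0 then 1 else 0) ?_)
    · positivity
    · simp [apply_ite (abs : ℝ → ℝ)]
  have hm0 : (0:ℝ) < m := lt_of_lt_of_le one_pos hm
  have h1ρ : (0:ℝ) < 1 - ρ := by linarith
  -- powers of P₂ are stochastic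
  have hPownn : ∀ (t : ℕ) (s z : S), 0 ≤ (P₂ ^ t) s z := by
    intro t
    induction t with
    | zero =>
      intro s z
      rw [pow_zero]
      by_cases h : s = z <;> simp [Matrix.one_apply, h]
    | succ t ih =>
      intro s z
      rw [pow_succ, Matrix.mul_apply]
      exact Finset.sum_nonneg fun k _ => mul_nonneg (ih s k) (hP₂nn k z)
  have hPowrow : ∀ (t : ℕ) (s : S), ∑ z, (P₂ ^ t) s z = 1 := by
    intro t
    induction t with
    | zero => intro s; simp [Matrix.one_apply]
    | succ t ih =>
      intro s
      simp only [pow_succ, Matrix.mul_apply]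
      rw [Finset.sum_comm]
      calc ∑ k, ∑ z, (P₂ ^ t) s k * P₂ k z
          = ∑ k, (P₂ ^ t) s k * ∑ z, P₂ k z := by simp [Finset.mul_sum]
        _ = 1 := by simp [hP₂row, ih]
  set v : S → ℝ := fun z => ∑ s, μ₁ s * (P₁ s z - P₂ s z) with hv
  have hμabs : ∑ s, |μ₁ s| = 1 := by
    rw [← hμ₁sum]; exact Finset.sum_congr rfl fun s _ => abs_of_nonneg (hμ₁nn s)
  have hvD : ∑ z, |v z| ≤ D := hD μ₁ hμabs
  have hvsum : ∑ z, v z = 0 := by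
    simp only [hv]
    rw [Finset.sum_comm]
    refine Finset.sum_eq_zero fun s _ => ?_
    rw [← Finset.mul_sum, Finset.sum_sub_distrib, hP₁row, hP₂row]
    ring
  have contract : ∀ i : ℕ, ∑ z, |∑ s, v s * (P₂ ^ i) s z| ≤ ∑ s, |v s| := by
    intro i
    calc ∑ z, |∑ s, v s * (P₂ ^ i) s z|
        ≤ ∑ z, ∑ s, |v s| * (P₂ ^ i) s z := by
          refine Finset.sum_le_sum fun z _ => ?_
          refine (Finset.abs_sum_le_sum_abs _ _).trans (le_of_eq ?_)
          refine Finset.sum_congr rfl fun s _ => ?_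
          rw [abs_mul, abs_of_nonneg (hPownn i s z)]
      _ = ∑ s, |v s| * ∑ z, (P₂ ^ i) s z := by
          rw [Finset.sum_comm]; simp [Finset.mul_sum]
      _ = ∑ s, |v s| := by simp [hPowrow]
  have ergbound : ∀ i : ℕ, ∑ z, |∑ s, v s * (P₂ ^ i) s z| ≤ D * (m * ρ ^ i) := by
    intro i
    have hrw : ∀ z, ∑ s, v s * (P₂ ^ i) s z = ∑ s, v s * ((P₂ ^ i) s z - μ₂ z) := by
      intro z
      simp only [mul_sub]
      rw [Finset.sum_sub_distrib, ← Finset.sum_mul, hvsum, zero_mul, sub_zero]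
    calc ∑ z, |∑ s, v s * (P₂ ^ i) s z|
        = ∑ z, |∑ s, v s * ((P₂ ^ i) s z - μ₂ z)| := by
          exact Finset.sum_congr rfl fun z _ => by rw [hrw]
      _ ≤ ∑ z, ∑ s, |v s| * |(P₂ ^ i) s z - μ₂ z| := by
          refine Finset.sum_le_sum fun z _ => ?_
          refine (Finset.abs_sum_le_sum_abs _ _).trans (le_of_eq ?_)
          exact Finset.sum_congr rfl fun s _ => abs_mul _ _
      _ = ∑ s, |v s| * ∑ z, |(P₂ ^ i) s z - μ₂ z| := by
          rw [Finset.sum_comm]; simp [Finset.mul_sum]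
      _ ≤ ∑ s, |v s| * (m * ρ ^ i) := by
          exact Finset.sum_le_sum fun s _ =>
            mul_le_mul_of_nonneg_left (herg₂ s i) (abs_nonneg _)
      _ = (∑ s, |v s|) * (m * ρ ^ i) := (Finset.sum_mul _ _ _).symm
      _ ≤ D * (m * ρ ^ i) := mul_le_mul_of_nonneg_right hvD (by positivity)
  have htel : ∀ (t : ℕ) (z : S), μ₁ z - (∑ s, μ₁ s * (P₂ ^ t) s z)
      = ∑ i ∈ Finset.range t, ∑ s, v s * (P₂ ^ i) s z := by
    intro t
    induction t with
    | zero =>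
      intro z
      simp [Matrix.one_apply, mul_ite]
    | succ t ih =>
      intro z
      rw [Finset.sum_range_succ, ← ih z]
      have hk : ∀ k, ∑ s, μ₁ s * P₂ s k = μ₁ k - v k := by
        intro k
        have hvk : v k = (∑ s, μ₁ s * P₁ s k) - ∑ s, μ₁ s * P₂ s k := by
          simp only [hv, mul_sub, Finset.sum_sub_distrib]
        rw [hvk, hμ₁stat k]; ring
      have hstep : ∑ s, μ₁ s * (P₂ ^ (t+1)) s z
          = (∑ s, μ₁ s * (P₂ ^ t) s z) - ∑ s, v s * (P₂ ^ t) s z := by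
        calc ∑ s, μ₁ s * (P₂ ^ (t+1)) s z
            = ∑ s, μ₁ s * ∑ k, P₂ s k * (P₂ ^ t) k z := by
              simp only [pow_succ', Matrix.mul_apply]
          _ = ∑ k, (∑ s, μ₁ s * P₂ s k) * (P₂ ^ t) k z := by
              simp only [Finset.mul_sum]
              rw [Finset.sum_comm]
              simp [Finset.sum_mul, mul_assoc]
          _ = ∑ k, (μ₁ k - v k) * (P₂ ^ t) k z := by
              exact Finset.sum_congr rfl fun k _ => by rw [hk k]
          _ = (∑ k, μ₁ k * (P₂ ^ t) k z) - ∑ k, v k * (P₂ ^ t) k z := by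
              simp [sub_mul, Finset.sum_sub_distrib]
      rw [hstep]; ring
  have hgeo : ∀ t, ∑ i ∈ Finset.Ico n t, ρ ^ i ≤ ρ ^ n / (1 - ρ) := by
    intro t
    rcases le_or_gt t n with h | h
    · rw [Finset.Ico_eq_empty (by omega)]
      simp only [Finset.sum_empty]
      positivity
    · rw [Finset.sum_Ico_eq_sum_range]
      have hS : ∑ j ∈ Finset.range (t - n), ρ ^ j = (1 - ρ ^ (t - n)) / (1 - ρ) := by
        have hmul : (∑ j ∈ Finset.range (t - n), ρ ^ j) * (ρ - 1) = ρ ^ (t - n) - 1 :=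
          geom_sum_mul ρ (t - n)
        rw [eq_div_iff h1ρ.ne']
        ring_nf
        ring_nf at hmul
        linarith
      calc ∑ j ∈ Finset.range (t - n), ρ ^ (n + j)
          = ρ ^ n * ∑ j ∈ Finset.range (t - n), ρ ^ j := by
            simp [pow_add, Finset.mul_sum]
        _ ≤ ρ ^ n * (1 / (1 - ρ)) := by
            refine mul_le_mul_of_nonneg_left ?_ (by positivity)
            rw [hS, div_le_div_iff₀ h1ρ h1ρ]
            nlinarith [pow_nonneg hρ0.le (t - n)]
        _ = ρ ^ n / (1 - ρ) := by ring
  have key : ∀ t : ℕ, ∑ z, |μ₁ z - μ₂ z|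
      ≤ ((n:ℝ) + m * ρ ^ n / (1 - ρ)) * D + m * ρ ^ t := by
    intro t
    have h1 : ∑ z, |μ₁ z - (∑ s, μ₁ s * (P₂ ^ t) s z)|
        ≤ ((n:ℝ) + m * ρ ^ n / (1 - ρ)) * D := by
      calc ∑ z, |μ₁ z - (∑ s, μ₁ s * (P₂ ^ t) s z)|
          = ∑ z, |∑ i ∈ Finset.range t, ∑ s, v s * (P₂ ^ i) s z| := by
            exact Finset.sum_congr rfl fun z _ => by rw [htel t z]
        _ ≤ ∑ z, ∑ i ∈ Finset.range t, |∑ s, v s * (P₂ ^ i) s z| :=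
            Finset.sum_le_sum fun z _ => Finset.abs_sum_le_sum_abs _ _
        _ = ∑ i ∈ Finset.range t, ∑ z, |∑ s, v s * (P₂ ^ i) s z| := Finset.sum_comm
        _ ≤ ∑ i ∈ Finset.range t, (if i < n then D else m * ρ ^ i * D) := by
            refine Finset.sum_le_sum fun i _ => ?_
            by_cases hi : i < n
            · simpa [hi] using (contract i).trans hvD
            · simp only [hi, if_false]
              calc ∑ z, |∑ s, v s * (P₂ ^ i) s z| ≤ D * (m * ρ ^ i) := ergbound i
                _ = m * ρ ^ i * D := by ring
        _ ≤ (n:ℝ) * D + ∑ i ∈ Finset.Ico n t, m * ρ ^ i * D := by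
            rcases le_or_gt t n with h | h
            · rw [Finset.Ico_eq_empty (by omega), Finset.sum_empty]
              calc ∑ i ∈ Finset.range t, (if i < n then D else m * ρ ^ i * D)
                  = ∑ _i ∈ Finset.range t, D := by
                    refine Finset.sum_congr rfl fun i hi => ?_
                    rw [if_pos (by have := Finset.mem_range.mp hi; omega)]
                _ = (t:ℝ) * D := by simp [mul_comm]
                _ ≤ (n:ℝ) * D + 0 := by
                    rw [add_zero]
                    exact mul_le_mul_of_nonneg_right (by exact_mod_cast h) hD0
            · rw [Finset.range_eq_Ico, ← Finset.sum_Ico_consecutive _ (Nat.zero_le n) h.le]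
              have e1 : ∑ i ∈ Finset.Ico 0 n, (if i < n then D else m * ρ ^ i * D)
                  = (n:ℝ) * D := by
                calc ∑ i ∈ Finset.Ico 0 n, (if i < n then D else m * ρ ^ i * D)
                    = ∑ _i ∈ Finset.Ico 0 n, D := by
                      refine Finset.sum_congr rfl fun i hi => ?_
                      rw [if_pos (Finset.mem_Ico.mp hi).2]
                  _ = (n:ℝ) * D := by simp [mul_comm]
              have e2 : ∑ i ∈ Finset.Ico n t, (if i < n then D else m * ρ ^ i * D)
                  = ∑ i ∈ Finset.Ico n t, m * ρ ^ i * D := by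
                refine Finset.sum_congr rfl fun i hi => ?_
                rw [if_neg (by have := (Finset.mem_Ico.mp hi).1; omega)]
              rw [e1, e2]
        _ ≤ (n:ℝ) * D + (m * ρ ^ n / (1 - ρ)) * D := by
            refine add_le_add_right ?_ _
            calc ∑ i ∈ Finset.Ico n t, m * ρ ^ i * D
                = m * D * ∑ i ∈ Finset.Ico n t, ρ ^ i := by
                  rw [Finset.mul_sum]; exact Finset.sum_congr rfl fun i _ => by ring
              _ ≤ m * D * (ρ ^ n / (1 - ρ)) := by
                  exact mul_le_mul_of_nonneg_left (hgeo t) (by positivity)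
              _ = (m * ρ ^ n / (1 - ρ)) * D := by ring
        _ = ((n:ℝ) + m * ρ ^ n / (1 - ρ)) * D := by ring
    have h2 : ∑ z, |(∑ s, μ₁ s * (P₂ ^ t) s z) - μ₂ z| ≤ m * ρ ^ t := by
      have hrw : ∀ z, (∑ s, μ₁ s * (P₂ ^ t) s z) - μ₂ z
          = ∑ s, μ₁ s * ((P₂ ^ t) s z - μ₂ z) := by
        intro z
        simp only [mul_sub]
        rw [Finset.sum_sub_distrib, ← Finset.sum_mul, hμ₁sum, one_mul]
      calc ∑ z, |(∑ s, μ₁ s * (P₂ ^ t) s z) - μ₂ z|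
          = ∑ z, |∑ s, μ₁ s * ((P₂ ^ t) s z - μ₂ z)| := by
            exact Finset.sum_congr rfl fun z _ => by rw [hrw]
        _ ≤ ∑ z, ∑ s, μ₁ s * |(P₂ ^ t) s z - μ₂ z| := by
            refine Finset.sum_le_sum fun z _ => ?_
            refine (Finset.abs_sum_le_sum_abs _ _).trans (le_of_eq ?_)
            refine Finset.sum_congr rfl fun s _ => ?_
            rw [abs_mul, abs_of_nonneg (hμ₁nn s)]
        _ = ∑ s, μ₁ s * ∑ z, |(P₂ ^ t) s z - μ₂ z| := by
            rw [Finset.sum_comm]; simp [Finset.mul_sum]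
        _ ≤ ∑ s, μ₁ s * (m * ρ ^ t) :=
            Finset.sum_le_sum fun s _ =>
              mul_le_mul_of_nonneg_left (herg₂ s t) (hμ₁nn s)
        _ = m * ρ ^ t := by rw [← Finset.sum_mul, hμ₁sum, one_mul]
    calc ∑ z, |μ₁ z - μ₂ z|
        ≤ ∑ z, (|μ₁ z - (∑ s, μ₁ s * (P₂ ^ t) s z)|
            + |(∑ s, μ₁ s * (P₂ ^ t) s z) - μ₂ z|) :=
          Finset.sum_le_sum fun z _ => abs_sub_le _ _ _
      _ = (∑ z, |μ₁ z - (∑ s, μ₁ s * (P₂ ^ t) s z)|)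
          + ∑ z, |(∑ s, μ₁ s * (P₂ ^ t) s z) - μ₂ z| := Finset.sum_add_distrib
      _ ≤ _ := add_le_add h1 h2
  have hlim : Filter.Tendsto
      (fun t : ℕ => ((n:ℝ) + m * ρ ^ n / (1 - ρ)) * D + m * ρ ^ t)
      Filter.atTop (nhds (((n:ℝ) + m * ρ ^ n / (1 - ρ)) * D)) := by
    have h0 : Filter.Tendsto (fun t : ℕ => ρ ^ t) Filter.atTop (nhds 0) :=
      tendsto_pow_atTop_nhds_zero_of_lt_one hρ0.le hρ1
    have h1 := (h0.const_mul m).const_add (((n:ℝ) + m * ρ ^ n / (1 - ρ)) * D)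
    simpa using h1
  exact ge_of_tendsto' hlim key
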